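/- Let G be a finite simple graph, let P = v_0-v_1-…-v_p be a path of G with p odd, p ≥ 3, such that P has at most one chord, any chord of P is of the form v_{t-1}v_{t+1} with 0 < t < p-1, and v_0v_2 is not a chord of P. Let z be a vertex not on P adjacent to v_0 and v_p but not adjacent to v_1 (a near-obstruction of Type 3), and let r be the smallest integer such that z is adjacent to v_r (so r ≥ 2). If r is odd, then z, v_0, v_1, …, v_r induce an odd cycle of length at least five with at most one chord, i.e., a Meyniel obstruction in G. -/

import Mathlib

open SimpleGraph

/-- The set of chords of a closed walk `c` in `G`: edges of `G` joining two
vertices of `c` that are not edges of `c` (i.e. not consecutive on `c`). -/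
def SimpleGraph.cycleChords {V : Type*} (G : SimpleGraph V) {u : V} (c : G.Walk u u) :
    Set (Sym2 V) :=
  {e | e ∈ G.edgeSet ∧ (∀ x ∈ e, x ∈ c.support) ∧ e ∉ c.edges}


/-- `v i` and `v j` span a chord of the path `v 0 - v 1 - ⋯ - v p`: an edge of `G`
joining two non-consecutive vertices of the path (with `i < j`). -/
def SimpleGraph.IsPathChord {V : Type*} (G : SimpleGraph V) (p : ℕ) (v : ℕ → V)
    (i j : ℕ) : Prop :=
  i + 2 ≤ j ∧ j ≤ p ∧ G.Adj (v i) (v j)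

/-- Near-obstruction of Type 3: `P = v 0 - ⋯ - v p` is a path with `p` odd, `p ≥ 3`,
with at most one chord, any chord being `v (t-1) v (t+1)` with `0 < t < p - 1`, and
`v 0 v 2` not a chord; `z` is a vertex off `P` adjacent to `v 0` and `v p` but not to
`v 1`.  If `r` is the smallest positive integer with `z` adjacent to `v r` and `r` is
odd, then `z, v 0, v 1, …, v r` induce an odd cycle of length at least five with at
most one chord, i.e. a Meyniel obstruction in `G`. -/
def pathWalk {V : Type*} (G : SimpleGraph V) (v : ℕ → V) :
    ∀ n, (∀ i, i < n → G.Adj (v i) (v (i + 1))) → G.Walk (v 0) (v n)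
  | 0, _ => Walk.nil
  | n + 1, h =>
    (pathWalk G v n (fun i hi => h i (Nat.lt_succ_of_lt hi))).concat (h n (Nat.lt_succ_self n))

theorem pathWalk_support {V : Type*} (G : SimpleGraph V) (v : ℕ → V) :
    ∀ n (h : ∀ i, i < n → G.Adj (v i) (v (i + 1))),
      (pathWalk G v n h).support = (List.range (n + 1)).map v
  | 0, _ => by simp [pathWalk, List.range_succ]
  | n + 1, h => by
    rw [pathWalk, Walk.support_concat, pathWalk_support G v n, List.range_succ (n := n + 1)]
    simp

theorem pathWalk_edges {V : Type*} (G : SimpleGraph V) (v : ℕ → V) :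
    ∀ n (h : ∀ i, i < n → G.Adj (v i) (v (i + 1))),
      (pathWalk G v n h).edges = (List.range n).map (fun i => s(v i, v (i + 1)))
  | 0, _ => by simp [pathWalk, List.range_succ]
  | n + 1, h => by
    rw [pathWalk, Walk.edges_concat, pathWalk_edges G v n, List.range_succ]
    simp

theorem pathWalk_length {V : Type*} (G : SimpleGraph V) (v : ℕ → V) :
    ∀ n (h : ∀ i, i < n → G.Adj (v i) (v (i + 1))),
      (pathWalk G v n h).length = n
  | 0, _ => by simp [pathWalk, List.range_succ]
  | n + 1, h => by rw [pathWalk, Walk.length_concat, pathWalk_length G v n]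

theorem type3_nearObstruction_oddCase_meynielObstruction {V : Type*} [Fintype V]
    (G : SimpleGraph V) (p : ℕ) (v : ℕ → V) (z : V) (r : ℕ)
    (hodd : Odd p) (hp : 3 ≤ p) (hinj : Set.InjOn v (Set.Iic p))
    (hpath : ∀ i, i < p → G.Adj (v i) (v (i + 1)))
    (hshape : ∀ i j, G.IsPathChord p v i j → ∃ t, 0 < t ∧ t < p - 1 ∧ i = t - 1 ∧ j = t + 1)
    (hone : ∀ i j i' j', G.IsPathChord p v i j → G.IsPathChord p v i' j' → i = i' ∧ j = j')
    (h02 : ¬ G.Adj (v 0) (v 2))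
    (hz : ∀ i, i ≤ p → z ≠ v i)
    (hz0 : G.Adj z (v 0)) (hzp : G.Adj z (v p)) (hz1 : ¬ G.Adj z (v 1))
    (hr1 : 1 ≤ r) (hrp : r ≤ p) (hzr : G.Adj z (v r))
    (hrmin : ∀ i, 1 ≤ i → i < r → ¬ G.Adj z (v i))
    (hrodd : Odd r) :
    ∃ (u : V) (c : G.Walk u u), c.IsCycle ∧ Odd c.length ∧ 5 ≤ c.length ∧
      {x | x ∈ c.support} = insert z (v '' Set.Iic r) ∧
      (G.cycleChords c).ncard ≤ 1 := by
  -- basic facts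
  have hr3 : 3 ≤ r := by
    have h1 : r ≠ 1 := by rintro rfl; exact hz1 hzr
    obtain ⟨k, hk⟩ := hrodd
    omega
  have hvne : ∀ i j, i ≤ p → j ≤ p → i ≠ j → v i ≠ v j := by
    intro i j hi hj hij hval
    exact hij (hinj hi hj hval)
  have hadj : ∀ i, i < r → G.Adj (v i) (v (i + 1)) := fun i hi => hpath i (lt_of_lt_of_le hi hrp)
  -- the walk along the path
  set w : G.Walk (v 0) (v r) := pathWalk G v r hadj with hw
  have hwsup : w.support = (List.range (r + 1)).map v := pathWalk_support G v r hadj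
  have hwed : w.edges = (List.range r).map (fun i => s(v i, v (i + 1))) := pathWalk_edges G v r hadj
  have hwlen : w.length = r := pathWalk_length G v r hadj
  -- the walk v 0 ... v r - z
  set w2 : G.Walk (v 0) z := w.concat hzr.symm with hw2
  have hw2sup : w2.support = (List.range (r + 1)).map v ++ [z] := by
    rw [hw2, Walk.support_concat, hwsup]
  have hw2ed : w2.edges = (List.range r).map (fun i => s(v i, v (i + 1))) ++ [s(v r, z)] := by
    rw [hw2, Walk.edges_concat, hwed, List.concat_eq_append]
  -- the cycle
  set c : G.Walk z z := Walk.cons hz0 w2 with hc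
  have hcsup : c.support = z :: ((List.range (r + 1)).map v ++ [z]) := by
    rw [hc, Walk.support_cons, hw2sup]
  have hced : c.edges = s(z, v 0) :: ((List.range r).map (fun i => s(v i, v (i + 1))) ++ [s(v r, z)]) := by
    rw [hc, Walk.edges_cons, hw2ed]
  have hmemsup : ∀ x, x ∈ c.support ↔ x = z ∨ ∃ i, i ≤ r ∧ x = v i := by
    intro x
    rw [hcsup]
    simp only [List.mem_cons, List.mem_append, List.mem_map, List.mem_range,
      List.mem_singleton, List.not_mem_nil, or_false]
    constructor
    · rintro (rfl | ⟨⟨i, hi, rfl⟩ | rfl⟩)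
      · exact Or.inl rfl
      · exact Or.inr ⟨i, by omega, rfl⟩
      · exact Or.inl rfl
    · rintro (rfl | ⟨i, hi, rfl⟩)
      · exact Or.inl rfl
      · exact Or.inr (Or.inl ⟨i, by omega, rfl⟩)
  -- the cycle property
  have hpathw2 : w2.IsPath := by
    apply Walk.IsPath.mk'
    rw [hw2sup]
    rw [List.nodup_append]
    refine ⟨?_, List.nodup_singleton z, ?_⟩
    · refine List.Nodup.map_on ?_ List.nodup_range
      intro i hi j hj hval
      simp only [List.mem_range] at hi hj
      by_contra hij
      exact hvne i j (by omega) (by omega) hij hval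
    · intro a ha
      simp only [List.mem_map, List.mem_range] at ha
      obtain ⟨i, hi, rfl⟩ := ha
      simp only [List.mem_singleton]
      exact fun b hb h => hz i (by omega) (by subst hb; exact h.symm)
  have hcyc : c.IsCycle := by
    rw [hc, Walk.cons_isCycle_iff]
    refine ⟨hpathw2, ?_⟩
    rw [hw2ed]
    simp only [List.mem_append, List.mem_map, List.mem_range, List.mem_singleton, not_or]
    constructor
    · rintro ⟨i, hi, he⟩
      rw [Sym2.eq_iff] at he
      rcases he with ⟨h1, _⟩ | ⟨_, h2⟩
      · exact hz i (by omega) h1.symm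
      · exact hz (i + 1) (by omega) h2.symm
    · intro he
      rw [Sym2.eq_iff] at he
      rcases he with ⟨h1, _⟩ | ⟨_, h2⟩
      · exact hz r hrp h1
      · exact hvne 0 r (by omega) hrp (by omega) h2
  have hclen : c.length = r + 2 := by
    rw [hc, Walk.length_cons, hw2, Walk.length_concat, hwlen]
  -- edges membership helpers
  have hedge_mem : ∀ i, i < r → s(v i, v (i + 1)) ∈ c.edges := by
    intro i hi
    rw [hced]
    simp only [List.mem_cons, List.mem_append, List.mem_map, List.mem_range, List.mem_singleton]
    exact Or.inr (Or.inl ⟨i, hi, rfl⟩)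
  have hedge0 : s(z, v 0) ∈ c.edges := by rw [hced]; exact List.mem_cons_self
  have hedger : s(v r, z) ∈ c.edges := by
    rw [hced]
    exact List.mem_cons_of_mem _ (List.mem_append_right _ (List.mem_singleton_self _))
  -- chord characterization
  have hchord : ∀ e ∈ G.cycleChords c, ∃ i j, G.IsPathChord p v i j ∧ j ≤ r ∧ e = s(v i, v j) := by
    intro e he
    obtain ⟨hadj', hsup', hne'⟩ := he
    induction e using Sym2.ind with
    | _ x y =>
    rw [mem_edgeSet] at hadj'
    have hx : x ∈ c.support := hsup' x (Sym2.mem_mk_left x y)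
    have hy : y ∈ c.support := hsup' y (Sym2.mem_mk_right x y)
    rw [hmemsup] at hx hy
    -- handle "z" endpoints
    have hzcase : ∀ i, i ≤ r → G.Adj z (v i) → s(z, v i) ∈ c.edges := by
      intro i hi hadji
      rcases Nat.eq_zero_or_pos i with rfl | hi0
      · exact hedge0
      rcases eq_or_lt_of_le hi with rfl | hilt
      · rw [Sym2.eq_swap]; exact hedger
      · exact absurd hadji (hrmin i hi0 hilt)
    -- key sub-claim for two path vertices
    have hvv : ∀ i j, i ≤ r → j ≤ r → i < j → G.Adj (v i) (v j) → s(v i, v j) ∉ c.edges →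
        ∃ i' j', G.IsPathChord p v i' j' ∧ j' ≤ r ∧ s(v i, v j) = s(v i', v j') := by
      intro i j hi hj hij hadjij hnij
      rcases eq_or_lt_of_le (Nat.succ_le_of_lt hij) with hj1 | hj2
      · exact absurd (hj1 ▸ hedge_mem i (by omega)) hnij
      · exact ⟨i, j, ⟨by omega, le_trans hj hrp, hadjij⟩, hj, rfl⟩
    rcases hx with rfl | ⟨i, hi, rfl⟩
    · rcases hy with rfl | ⟨i, hi, rfl⟩
      · exact absurd hadj' (G.irrefl)
      · exact absurd (hzcase i hi hadj') hne'
    · rcases hy with rfl | ⟨j, hj, rfl⟩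
      · rw [Sym2.eq_swap] at hne' ⊢
        exact absurd (hzcase i hi hadj'.symm) hne'
      · have hij : i ≠ j := by
          intro h; subst h; exact absurd hadj' (G.irrefl)
        rcases Nat.lt_or_ge i j with h | h
        · exact hvv i j hi hj h hadj' hne'
        · have h' : j < i := by omega
          rw [Sym2.eq_swap] at hne' ⊢
          exact hvv j i hj hi h' hadj'.symm hne'
  -- assemble
  refine ⟨z, c, hcyc, ?_, ?_, ?_, ?_⟩
  · rw [hclen]; obtain ⟨k, hk⟩ := hrodd; exact ⟨k + 1, by omega⟩
  · rw [hclen]; omega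
  · ext x
    simp only [Set.mem_setOf_eq, Set.mem_insert_iff, Set.mem_image, Set.mem_Iic, hmemsup]
    constructor
    · rintro (rfl | ⟨i, hi, rfl⟩)
      · exact Or.inl rfl
      · exact Or.inr ⟨i, hi, rfl⟩
    · rintro (rfl | ⟨i, hi, rfl⟩)
      · exact Or.inl rfl
      · exact Or.inr ⟨i, hi, rfl⟩
  · rw [Set.ncard_le_one (Set.toFinite _)]
    intro a ha b hb
    obtain ⟨i, j, hc1, _, rfl⟩ := hchord a ha
    obtain ⟨i', j', hc2, _, rfl⟩ := hchord b hb
    obtain ⟨rfl, rfl⟩ := hone i j i' j' hc1 hc2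
    rfl
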